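/- Let u : D₁^∞ → [−∞, ∞) be ∞-subharmonic (upper semicontinuous and subharmonic in each variable separately) on D₁^∞ = ℓ¹ ∩ D^∞, and let a ∈ ℝ. If u ≤ a on D₁^∞ and u(η) = a for some η ∈ D₁^∞, then u is identically equal to a on D₁^∞. -/

import Mathlib

open MeasureTheory Filter Metric

/-- `v : ℂ → [−∞,∞)` is subharmonic on `s`: upper semicontinuous and satisfying the
sub-mean value inequality on circles (expressed via integrable real majorants). -/
def ESubharmonicOn (v : ℂ → EReal) (s : Set ℂ) : Prop :=
  UpperSemicontinuousOn v s ∧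
    ∀ z ∈ s, ∀ ρ : ℝ, 0 < ρ → closedBall z ρ ⊆ s →
      ∀ f : ℝ → ℝ, IntervalIntegrable f volume 0 (2 * Real.pi) →
        (∀ θ : ℝ, v (z + ρ * Complex.exp (θ * Complex.I)) ≤ (f θ : EReal)) →
        v z ≤ (((2 * Real.pi)⁻¹ * ∫ θ in (0:ℝ)..(2 * Real.pi), f θ : ℝ) : EReal)

/-- If `v` is subharmonic on an open set `s`, bounded above by `a`, attains the value `a`
at the center `z` of a closed ball contained in `s`, then `v ≡ a` on that closed ball. -/
lemma esub_eq_on_closedBall (v : ℂ → EReal) (s : Set ℂ) (hs : IsOpen s)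
    (hsub : ESubharmonicOn v s) (a : ℝ) (hle : ∀ z ∈ s, v z ≤ (a : EReal))
    (z : ℂ) (hz : z ∈ s) (hva : v z = (a : EReal)) (ρ : ℝ)
    (hball : closedBall z ρ ⊆ s) :
    ∀ w ∈ closedBall z ρ, v w = (a : EReal) := by
  intro w hw
  by_contra hne
  have hws : w ∈ s := hball hw
  have hwa : v w < (a : EReal) := lt_of_le_of_ne (hle w hws) hne
  have hwz : w ≠ z := by rintro rfl; rw [hva] at hwa; exact lt_irrefl _ hwa
  set r : ℝ := dist w z with hrdef
  have hr0 : 0 < r := dist_pos.2 hwz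
  have hrρ : r ≤ ρ := mem_closedBall.1 hw
  have hball' : closedBall z r ⊆ s := (closedBall_subset_closedBall hrρ).trans hball
  obtain ⟨c, hc1, hc2⟩ := EReal.exists_between_coe_real hwa
  have hca : c < a := by exact_mod_cast hc2
  have hev : ∀ᶠ y in nhds w, v y < (c : EReal) := by
    have := hsub.1 w hws (c : EReal) hc1
    rwa [hs.nhdsWithin_eq hws] at this
  obtain ⟨δ, hδ0, hδ⟩ := Metric.eventually_nhds_iff.1 hev
  set θ₀ : ℝ := (w - z).arg with hθ₀def
  set s₀ : ℝ := if θ₀ < 0 then θ₀ + 2 * Real.pi else θ₀ with hs₀def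
  have hpi : (0:ℝ) < Real.pi := Real.pi_pos
  have hs₀0 : 0 ≤ s₀ := by
    rw [hs₀def]; split
    · nlinarith [Complex.neg_pi_lt_arg (w - z)]
    · linarith
  have hs₀2π : s₀ < 2 * Real.pi := by
    rw [hs₀def]; split
    · linarith
    · nlinarith [Complex.arg_le_pi (w - z), ‹¬ θ₀ < 0›]
  have hwzr : (w - z) = (r : ℂ) * Complex.exp (s₀ * Complex.I) := by
    have h1 : (‖w - z‖ : ℂ) * Complex.exp (θ₀ * Complex.I) = w - z :=
      Complex.norm_mul_exp_arg_mul_I (w - z)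
    have hra : ‖w - z‖ = r := by rw [hrdef, Complex.dist_eq]
    rw [hs₀def]
    split
    · rw [← h1, hra]
      congr 1
      push_cast
      rw [add_mul, Complex.exp_add,
        show ((2:ℂ) * Real.pi * Complex.I) = (2 * Real.pi * Complex.I) by norm_num,
        Complex.exp_two_pi_mul_I]
      ring
    · rw [← h1, hra]
  set τ : ℝ := min (min (δ / (4 * r)) 1) (2 * Real.pi - s₀) with hτdef
  have hτ0 : 0 < τ := lt_min (lt_min (by positivity) one_pos) (by linarith)
  have hτ1 : τ ≤ 1 := le_trans (min_le_left _ _) (min_le_right _ _)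
  have hτδ : τ ≤ δ / (4 * r) := le_trans (min_le_left _ _) (min_le_left _ _)
  have hτs : s₀ + τ ≤ 2 * Real.pi := by
    have := min_le_right (min (δ / (4*r)) 1) (2*Real.pi - s₀); linarith
  set f : ℝ → ℝ := fun θ => a + Set.indicator (Set.Icc s₀ (s₀ + τ)) (fun _ => c - a) θ
    with hfdef
  have hind : Integrable (Set.indicator (Set.Icc s₀ (s₀ + τ)) (fun _ => c - a)) volume := by
    rw [integrable_indicator_iff measurableSet_Icc]
    exact integrableOn_const measure_Icc_lt_top.ne
  have hfi : IntervalIntegrable f volume 0 (2 * Real.pi) :=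
    intervalIntegrable_const.add hind.intervalIntegrable
  -- majorization
  have hmaj : ∀ θ : ℝ, v (z + r * Complex.exp (θ * Complex.I)) ≤ (f θ : EReal) := by
    intro θ
    by_cases hθ : θ ∈ Set.Icc s₀ (s₀ + τ)
    · have hfθ : f θ = c := by
        rw [hfdef]; simp only [Set.indicator_of_mem hθ]; ring
      rw [hfθ]
      refine le_of_lt (hδ ?_)
      have hdist : dist (z + r * Complex.exp (θ * Complex.I)) w
          = r * ‖Complex.exp (θ * Complex.I) - Complex.exp (s₀ * Complex.I)‖ := by
        rw [Complex.dist_eq]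
        have : z + (r:ℂ) * Complex.exp (θ * Complex.I) - w
            = (r:ℂ) * (Complex.exp (θ * Complex.I) - Complex.exp (s₀ * Complex.I)) := by
          have hw' : w = z + (r:ℂ) * Complex.exp (s₀ * Complex.I) := by
            rw [← hwzr]; ring
          rw [hw']; ring
        rw [this, norm_mul, Complex.norm_real, Real.norm_eq_abs, abs_of_pos hr0]
      rw [hdist]
      have hexp : ‖Complex.exp (θ * Complex.I) - Complex.exp (s₀ * Complex.I)‖
          ≤ 2 * |θ - s₀| := by
        have h : Complex.exp (θ * Complex.I) - Complex.exp (s₀ * Complex.I)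
            = Complex.exp (s₀ * Complex.I) * (Complex.exp ((θ - s₀ : ℝ) * Complex.I) - 1) := by
          rw [mul_sub, ← Complex.exp_add]
          push_cast
          ring_nf
        have habs : |θ - s₀| ≤ 1 := by
          rw [abs_of_nonneg (by linarith [hθ.1])]
          linarith [hθ.2]
        rw [h, norm_mul, Complex.norm_exp_ofReal_mul_I, one_mul]
        have := Complex.norm_exp_sub_one_le (x := (θ - s₀ : ℝ) * Complex.I)
          (by rw [norm_mul, Complex.norm_I, mul_one, Complex.norm_real, Real.norm_eq_abs]; exact habs)
        rwa [norm_mul, Complex.norm_I, mul_one, Complex.norm_real, Real.norm_eq_abs] at this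
      have habs2 : |θ - s₀| ≤ τ := by
        rw [abs_of_nonneg (by linarith [hθ.1])]; linarith [hθ.2]
      calc r * ‖Complex.exp (θ * Complex.I) - Complex.exp (s₀ * Complex.I)‖
          ≤ r * (2 * τ) := by
            apply mul_le_mul_of_nonneg_left _ hr0.le
            calc ‖_‖ ≤ 2 * |θ - s₀| := hexp
              _ ≤ 2 * τ := by linarith
        _ ≤ δ / 2 := by
            have h4 : τ * (4 * r) ≤ δ := (le_div_iff₀ (by positivity)).1 hτδ
            nlinarith
        _ < δ := by linarith
    · have hfθ : f θ = a := by
        rw [hfdef]; simp [Set.indicator_of_notMem hθ]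
      rw [hfθ]
      apply hle
      apply hball'
      rw [mem_closedBall, Complex.dist_eq]
      have : z + (r:ℂ) * Complex.exp (θ * Complex.I) - z
          = (r:ℂ) * Complex.exp (θ * Complex.I) := by ring
      rw [this, norm_mul, Complex.norm_real, Complex.norm_exp_ofReal_mul_I, mul_one,
        Real.norm_eq_abs, abs_of_pos hr0]
  -- value of the integral
  have hint : (∫ θ in (0:ℝ)..(2 * Real.pi), f θ) = 2 * Real.pi * a + (c - a) * τ := by
    rw [hfdef]
    rw [intervalIntegral.integral_add intervalIntegrable_const hind.intervalIntegrable,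
      intervalIntegral.integral_const]
    have hvol : volume (Set.Icc s₀ (s₀ + τ) ∩ Set.Ioc 0 (2 * Real.pi)) = ENNReal.ofReal τ := by
      apply le_antisymm
      · calc volume (Set.Icc s₀ (s₀ + τ) ∩ Set.Ioc 0 (2 * Real.pi))
            ≤ volume (Set.Icc s₀ (s₀ + τ)) := measure_mono Set.inter_subset_left
          _ = ENNReal.ofReal τ := by rw [Real.volume_Icc]; ring_nf
      · calc ENNReal.ofReal τ = volume (Set.Ioc s₀ (s₀ + τ)) := by rw [Real.volume_Ioc]; ring_nf
          _ ≤ volume (Set.Icc s₀ (s₀ + τ) ∩ Set.Ioc 0 (2 * Real.pi)) := by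
              apply measure_mono
              intro x hx
              exact ⟨⟨hx.1.le, hx.2⟩, ⟨lt_of_le_of_lt hs₀0 hx.1, le_trans hx.2 hτs⟩⟩
    have h2 : (∫ θ in (0:ℝ)..(2 * Real.pi),
        Set.indicator (Set.Icc s₀ (s₀ + τ)) (fun _ => c - a) θ) = (c - a) * τ := by
      rw [intervalIntegral.integral_of_le (by linarith),
        MeasureTheory.integral_indicator measurableSet_Icc,
        Measure.restrict_restrict measurableSet_Icc, setIntegral_const, measureReal_def, hvol,
        ENNReal.toReal_ofReal hτ0.le, smul_eq_mul, mul_comm]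
    rw [h2]
    simp only [smul_eq_mul, sub_zero]
  -- contradiction with the sub-mean value inequality
  have hmean := hsub.2 z hz r hr0 hball' f hfi hmaj
  rw [hva, hint] at hmean
  have hmean' : (a:ℝ) ≤ (2 * Real.pi)⁻¹ * (2 * Real.pi * a + (c - a) * τ) := by
    exact_mod_cast hmean
  have h2π : (0:ℝ) < 2 * Real.pi := by linarith
  rw [mul_add, inv_mul_cancel_left₀ h2π.ne'] at hmean'
  nlinarith [mul_pos (sub_pos.2 hca) hτ0, inv_pos.2 h2π]

/-- Maximum principle for a subharmonic function on an open preconnected set. -/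
lemma esub_max_principle (v : ℂ → EReal) (s : Set ℂ) (hs : IsOpen s)
    (hconn : IsPreconnected s) (hsub : ESubharmonicOn v s) (a : ℝ)
    (hle : ∀ z ∈ s, v z ≤ (a : EReal)) (z₀ : ℂ) (hz₀ : z₀ ∈ s) (h0 : v z₀ = (a : EReal)) :
    ∀ z ∈ s, v z = (a : EReal) := by
  by_contra h
  push_neg at h
  obtain ⟨w, hws, hwa⟩ := h
  set U : Set ℂ := {z | z ∈ s ∧ v z = (a : EReal)} with hUdef
  set T : Set ℂ := {z | z ∈ s ∧ v z < (a : EReal)} with hTdef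
  have hU : IsOpen U := by
    rw [Metric.isOpen_iff]
    rintro z ⟨hzs, hza⟩
    obtain ⟨ε, hε0, hε⟩ := Metric.isOpen_iff.1 hs z hzs
    refine ⟨ε / 2, by linarith, fun y hy => ?_⟩
    have hcb : closedBall z (ε / 2) ⊆ s :=
      (closedBall_subset_ball (by linarith)).trans hε
    exact ⟨hcb (ball_subset_closedBall hy),
      esub_eq_on_closedBall v s hs hsub a hle z hzs hza (ε / 2) hcb y
        (ball_subset_closedBall hy)⟩
  have hT : IsOpen T := by
    rw [isOpen_iff_mem_nhds]
    rintro z ⟨hzs, hza⟩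
    have h1 : ∀ᶠ y in nhds z, v y < (a : EReal) := by
      have := hsub.1 z hzs (a : EReal) hza
      rwa [hs.nhdsWithin_eq hzs] at this
    filter_upwards [h1, hs.mem_nhds hzs] with y hy1 hy2
    exact ⟨hy2, hy1⟩
  have hcover : s ⊆ U ∪ T := by
    intro z hzs
    rcases (hle z hzs).lt_or_eq with h | h
    · exact Or.inr ⟨hzs, h⟩
    · exact Or.inl ⟨hzs, h⟩
  obtain ⟨x, _, ⟨_, hx1⟩, ⟨_, hx2⟩⟩ :=
    hconn U T hU hT hcover ⟨z₀, hz₀, hz₀, h0⟩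
      ⟨w, hws, hws, lt_of_le_of_ne (hle w hws) hwa⟩
  rw [hx1] at hx2
  exact lt_irrefl _ hx2

/-- Maximum principle: if `u` is `∞`-subharmonic on `D₁^∞`, `u ≤ a` there, and `u η = a`
at some point `η ∈ D₁^∞`, then `u ≡ a` on `D₁^∞`. -/
theorem infty_subharmonic_max_principle
    (u : lp (fun _ : ℕ => ℂ) 1 → EReal)
    (D1 : Set (lp (fun _ : ℕ => ℂ) 1))
    (hD1 : D1 = {ζ | ∀ n, ‖ζ n‖ < 1})
    (husc : UpperSemicontinuousOn u D1)
    (hsub : ∀ ζ ∈ D1, ∀ j : ℕ,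
      ESubharmonicOn (fun z => u (ζ + lp.single 1 j (z - ζ j))) (ball (0:ℂ) 1))
    (a : ℝ) (hle : ∀ ζ ∈ D1, u ζ ≤ (a : EReal))
    (η : lp (fun _ : ℕ => ℂ) 1) (hη : η ∈ D1) (hua : u η = (a : EReal)) :
    ∀ ζ ∈ D1, u ζ = (a : EReal) := by
  intro ζ hζ
  have hζ' : ∀ n, ‖ζ n‖ < 1 := by rw [hD1] at hζ; exact hζ
  have hη' : ∀ n, ‖η n‖ < 1 := by rw [hD1] at hη; exact hη
  -- the finite modifications of η towards ζ
  set σ : ℕ → lp (fun _ : ℕ => ℂ) 1 :=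
    fun N => η + ∑ j ∈ Finset.range N, lp.single 1 j (ζ j - η j) with hσdef
  have hσcoord : ∀ N n, (σ N) n = if n < N then ζ n else η n := by
    intro N n
    rw [hσdef]
    rw [lp.coeFn_add, Pi.add_apply, lp.coeFn_sum, Finset.sum_apply]
    simp only [lp.single_apply, Finset.sum_dite_eq, Finset.mem_range]
    split <;> simp [*]
  have hσmem : ∀ N, σ N ∈ D1 := by
    intro N
    rw [hD1]
    intro n
    rw [hσcoord]
    split
    · exact hζ' n
    · exact hη' n
  -- by induction, u is equal to a at each σ N
  have hσval : ∀ N, u (σ N) = (a : EReal) := by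
    intro N
    induction N with
    | zero => simpa [hσdef] using hua
    | succ N ih =>
      have hξ := hσmem N
      have hs' := hsub (σ N) hξ N
      have hcN : (σ N) N = η N := by rw [hσcoord]; simp
      have hmemz : ∀ z ∈ ball (0:ℂ) 1, (σ N + lp.single 1 N (z - (σ N) N)) ∈ D1 := by
        intro z hz
        rw [hD1]
        intro n
        by_cases hn : n = N
        · rw [lp.coeFn_add, Pi.add_apply, hn, lp.single_apply_self, hcN]
          have : η N + (z - η N) = z := by ring
          rw [this]
          rwa [mem_ball_zero_iff] at hz
        · rw [lp.coeFn_add, Pi.add_apply, lp.single_apply_ne _ _ _ hn, add_zero]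
          rw [hD1] at hξ
          exact hξ n
      have hle' : ∀ z ∈ ball (0:ℂ) 1,
          u (σ N + lp.single 1 N (z - (σ N) N)) ≤ (a : EReal) :=
        fun z hz => hle _ (hmemz z hz)
      have hηmem : η N ∈ ball (0:ℂ) 1 := by
        rw [mem_ball_zero_iff]; exact hη' N
      have hζmem : ζ N ∈ ball (0:ℂ) 1 := by
        rw [mem_ball_zero_iff]; exact hζ' N
      have hatη : u (σ N + lp.single 1 N (η N - (σ N) N)) = (a : EReal) := by
        have hz0 : (lp.single 1 N (η N - (σ N) N) : lp (fun _ : ℕ => ℂ) 1) = 0 := by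
          rw [hcN, sub_self]
          apply lp.ext
          funext j
          by_cases h : j = N
          · subst h; simp [lp.single_apply]
          · simp [lp.single_apply_ne _ _ _ h]
        rw [hz0, add_zero, ih]
      have := esub_max_principle _ (ball (0:ℂ) 1) isOpen_ball
        (convex_ball (0:ℂ) 1).isPreconnected hs' a hle' (η N) hηmem hatη (ζ N) hζmem
      have hstep : σ (N + 1) = σ N + lp.single 1 N (ζ N - (σ N) N) := by
        rw [hσdef]
        simp only [Finset.sum_range_succ]
        rw [hcN]
        abel
      rw [hstep]
      exact this
  -- σ N converges to ζ
  have hlim : Filter.Tendsto σ Filter.atTop (nhds ζ) := by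
    haveI : Fact ((1:ENNReal) ≤ 1) := ⟨le_refl _⟩
    have h1 : HasSum (fun j => lp.single 1 j ((ζ - η) j)) (ζ - η) :=
      lp.hasSum_single (by norm_num) (ζ - η)
    have h2 := (h1.tendsto_sum_nat).const_add η
    rw [add_sub_cancel] at h2
    exact h2
  -- conclude by upper semicontinuity
  rcases (hle ζ hζ).lt_or_eq with hlt | heq
  · exfalso
    have hev := husc ζ hζ (a : EReal) hlt
    have hlim' : Filter.Tendsto σ Filter.atTop (nhdsWithin ζ D1) :=
      tendsto_nhdsWithin_of_tendsto_nhds_of_eventually_within σ hlim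
        (Filter.Eventually.of_forall hσmem)
    obtain ⟨N, hN⟩ := (hlim'.eventually hev).exists
    rw [hσval N] at hN
    exact lt_irrefl _ hN
  · exact heq
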